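/- Let D be a design with exactly n = R ≥ 2 factors of strength R−1, each factor given a normalized orthogonal coding. Let P = ∏_{i=1}^{R} s i and let r = N mod P. Then the projection frequency of the full factor set satisfies a_R({1,…,R}) ≥ r(P − r)/N², with equality if and only if D has weak strength R, i.e., every point x of the full factorial Fin(s 1) × ⋯ × Fin(s R) occurs among the rows of D either ⌊N/P⌋ or ⌊N/P⌋ + 1 times. -/

import Mathlib

open Finset Matrix

/-- A design `D` (rows = runs, coordinates = factors) has strength `t` if in every
projection onto `t` factors every level combination occurs equally often. -/
def hasStrength {N n : ℕ} (s : Fin n → ℕ) (D : Fin N → ∀ i, Fin (s i)) (t : ℕ) : Prop :=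
  ∀ T : Finset (Fin n), T.card = t → ∀ x : ∀ i, Fin (s i),
    (Finset.univ.filter fun r => ∀ i ∈ T, D r i = x i).card = N / ∏ i ∈ T, s i

/-- Normalized orthogonal coding: contrast columns have zero sum and
`Cᵀ C = m • 1` (squared length `m`, pairwise orthogonal). -/
def isNOC {m : ℕ} (C : Fin m → Fin (m - 1) → ℝ) : Prop :=
  (∀ j, ∑ l, C l j = 0) ∧
    ∀ j j', ∑ l, C l j * C l j' = if j = j' then (m : ℝ) else 0

/-- Column (indexed by the tuple `j`) of the interaction model matrix of the set `U`
of factors, evaluated at run `r`. -/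
def intCol {N n : ℕ} {s : Fin n → ℕ} (C : ∀ i, Fin (s i) → Fin (s i - 1) → ℝ)
    (D : Fin N → ∀ i, Fin (s i)) (U : Finset (Fin n))
    (j : ∀ i : U, Fin (s i.1 - 1)) (r : Fin N) : ℝ :=
  ∏ i : U, C i.1 (D r i.1) (j i)

/-- Projection frequency `a_k(U)`: sum of squared column sums of the interaction
model matrix of `U`, divided by `N²`. -/
noncomputable def projFreq {N n : ℕ} {s : Fin n → ℕ}
    (C : ∀ i, Fin (s i) → Fin (s i - 1) → ℝ)
    (D : Fin N → ∀ i, Fin (s i)) (U : Finset (Fin n)) : ℝ :=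
  (∑ j : ∀ i : U, Fin (s i.1 - 1), (∑ r, intCol C D U j r) ^ 2) / (N : ℝ) ^ 2

/-- for a design with exactly `n = R` factors of strength `R-1`, the
projection frequency of the full factor set satisfies `a_R ≥ r(P - r)/N²` where
`P = ∏ s i` and `r = N mod P`, with equality iff every point of the full factorial
occurs `⌊N/P⌋` or `⌊N/P⌋ + 1` times among the rows of `D` (weak strength `R`). -/
def Ct {m : ℕ} (C : Fin m → Fin (m - 1) → ℝ) (l : Fin m)
    (o : Option (Fin (m - 1))) : ℝ := o.elim 1 (C l)

lemma ct_row_orth {m : ℕ} (hm : 2 ≤ m) {C : Fin m → Fin (m - 1) → ℝ}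
    (hC : isNOC C) (l l' : Fin m) :
    ∑ o : Option (Fin (m - 1)), Ct C l o * Ct C l' o = if l = l' then (m : ℝ) else 0 := by
  have e : Fin m ≃ Option (Fin (m - 1)) :=
    ((finSuccEquiv (m - 1)).symm.trans (finCongr (by omega : m - 1 + 1 = m))).symm
  set B : Matrix (Fin m) (Option (Fin (m - 1))) ℝ := fun l o => Ct C l o with hB
  have hm0 : (m : ℝ) ≠ 0 := by positivity
  have hcol : Bᵀ * B = (m : ℝ) • 1 := by
    ext o o'
    simp only [Matrix.mul_apply, Matrix.transpose_apply, Matrix.smul_apply, Matrix.one_apply,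
      smul_eq_mul, mul_ite, mul_one, mul_zero]
    match o, o' with
    | none, none => simp [hB, Ct]
    | none, some j => simpa [hB, Ct] using hC.1 j
    | some j, none => simpa [hB, Ct, mul_comm] using hC.1 j
    | some j, some j' => simpa [hB, Ct] using hC.2 j j'
  have h1 : ((m : ℝ)⁻¹ • Bᵀ) * B = 1 := by
    rw [Matrix.smul_mul, hcol, smul_smul, inv_mul_cancel₀ hm0, one_smul]
  have h2 : B * ((m : ℝ)⁻¹ • Bᵀ) = 1 := (Matrix.mul_eq_one_comm_of_equiv e).mpr h1
  have h3 : B * Bᵀ = (m : ℝ) • 1 := by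
    have := congrArg (fun M => (m : ℝ) • M) h2
    simpa [Matrix.mul_smul, smul_smul, mul_inv_cancel₀ hm0] using this
  have := congrFun (congrFun h3 l) l'
  simp only [Matrix.mul_apply, Matrix.transpose_apply] at this
  simpa [Matrix.mul_apply, Matrix.transpose_apply, Matrix.smul_apply, Matrix.one_apply,
    mul_ite, mul_one, mul_zero, hB] using this

lemma sum_pi_prod {ι : Type*} [Fintype ι] [DecidableEq ι] {κ : ι → Type*}
    [∀ i, Fintype (κ i)] (f : ∀ i, κ i → ℝ) :
    ∑ j : ∀ i, κ i, ∏ i, f i (j i) = ∏ i, ∑ o, f i o := by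
  rw [Finset.prod_univ_sum, Fintype.piFinset_univ]

theorem statement8 {N R : ℕ} (hN : 1 ≤ N) (hR : 2 ≤ R)
    {s : Fin R → ℕ} (hs : ∀ i, 2 ≤ s i)
    (D : Fin N → ∀ i, Fin (s i)) (hD : hasStrength s D (R - 1))
    (C : ∀ i, Fin (s i) → Fin (s i - 1) → ℝ) (hC : ∀ i, isNOC (C i)) :
    ((N % ∏ i, s i : ℕ) : ℝ) * ((∏ i, s i : ℕ) - (N % ∏ i, s i : ℕ)) / (N : ℝ) ^ 2
        ≤ projFreq C D Finset.univ ∧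
      (projFreq C D Finset.univ =
          ((N % ∏ i, s i : ℕ) : ℝ) * ((∏ i, s i : ℕ) - (N % ∏ i, s i : ℕ)) / (N : ℝ) ^ 2 ↔
        ∀ x : ∀ i, Fin (s i),
          (Finset.univ.filter fun r => D r = x).card = N / ∏ i, s i ∨
          (Finset.univ.filter fun r => D r = x).card = N / ∏ i, s i + 1) := by
  classical
  set P : ℕ := ∏ i, s i with hP
  set q : ℕ := N / P with hq
  set rr : ℕ := N % P with hrr
  have hPpos : 0 < P := Finset.prod_pos fun i _ => by have := hs i; omega
  set cnt : (∀ i, Fin (s i)) → ℕ := fun x => (Finset.univ.filter fun r => D r = x).card with hcnt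
  have hcard : Fintype.card (∀ i, Fin (s i)) = P := by
    simp [hP, Fintype.card_pi]
  have hsum_cnt : ∑ x, cnt x = N := by
    have := Finset.card_eq_sum_card_fiberwise
      (f := D) (s := Finset.univ) (t := Finset.univ) (fun r _ => Finset.mem_univ (D r))
    simpa [hcnt] using this.symm
  -- the augmented interaction columns
  set g : Fin N → (∀ i, Option (Fin (s i - 1))) → ℝ :=
    fun r j => ∏ i, Ct (C i) (D r i) (j i) with hg
  set Q : ℝ := ∑ j : ∀ i, Option (Fin (s i - 1)), (∑ r, g r j) ^ 2 with hQ
  -- Claim 1 : Q = P * ∑ cnt²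
  have pair : ∀ r r' : Fin N, ∑ j : ∀ i, Option (Fin (s i - 1)), g r j * g r' j
      = if D r = D r' then (P : ℝ) else 0 := by
    intro r r'
    have h1 : ∀ j : ∀ i, Option (Fin (s i - 1)), g r j * g r' j
        = ∏ i, (Ct (C i) (D r i) (j i) * Ct (C i) (D r' i) (j i)) := fun j =>
      (Finset.prod_mul_distrib).symm
    rw [Finset.sum_congr rfl fun j _ => h1 j,
      sum_pi_prod fun i o => Ct (C i) (D r i) o * Ct (C i) (D r' i) o]
    have h2 : ∀ i, ∑ o : Option (Fin (s i - 1)), Ct (C i) (D r i) o * Ct (C i) (D r' i) o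
        = if D r i = D r' i then (s i : ℝ) else 0 := fun i => ct_row_orth (hs i) (hC i) _ _
    rw [Finset.prod_congr rfl fun i _ => h2 i]
    by_cases h : D r = D r'
    · have h3 : ∀ i ∈ Finset.univ, (if D r i = D r' i then (s i : ℝ) else 0) = (s i : ℝ) :=
        fun i _ => if_pos (congrFun h i)
      rw [Finset.prod_congr rfl h3, if_pos h, hP]
      push_cast
      ring
    · obtain ⟨i, hi⟩ : ∃ i, D r i ≠ D r' i := by
        by_contra hcon; push_neg at hcon; exact h (funext hcon)
      rw [if_neg h]
      exact Finset.prod_eq_zero (Finset.mem_univ i) (by simp [hi])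
  have hcR : ∀ x, (cnt x : ℝ) = ∑ r, if D r = x then (1 : ℝ) else 0 := by
    intro x
    rw [hcnt]
    simp only [Finset.card_filter]
    push_cast
    rfl
  have hx : ∀ r r' : Fin N,
      ∑ x : ∀ i, Fin (s i), (if D r = x then (1:ℝ) else 0) * (if D r' = x then (1:ℝ) else 0)
        = if D r = D r' then (1:ℝ) else 0 := by
    intro r r'
    simp only [ite_mul, one_mul, zero_mul]
    rw [Finset.sum_ite_eq]
    simp [eq_comm]
  have hsq : ∑ x, (cnt x : ℝ) ^ 2 = ∑ r, ∑ r', if D r = D r' then (1:ℝ) else 0 := by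
    calc ∑ x, (cnt x : ℝ) ^ 2
        = ∑ x, ∑ r, ∑ r', (if D r = x then (1:ℝ) else 0) * (if D r' = x then (1:ℝ) else 0) := by
          refine Finset.sum_congr rfl fun x _ => ?_
          rw [hcR x, sq, Finset.sum_mul_sum]
      _ = ∑ r, ∑ r', ∑ x, (if D r = x then (1:ℝ) else 0) * (if D r' = x then (1:ℝ) else 0) := by
          rw [Finset.sum_comm]
          exact Finset.sum_congr rfl fun r _ => Finset.sum_comm
      _ = ∑ r, ∑ r', if D r = D r' then (1:ℝ) else 0 :=
          Finset.sum_congr rfl fun r _ => Finset.sum_congr rfl fun r' _ => hx r r'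
  have claim1 : Q = (P : ℝ) * ∑ x, (cnt x : ℝ) ^ 2 := by
    calc Q = ∑ j, ∑ r, ∑ r', g r j * g r' j := by
          rw [hQ]
          exact Finset.sum_congr rfl fun j _ => by rw [sq, Finset.sum_mul_sum]
      _ = ∑ r, ∑ r', ∑ j, g r j * g r' j := by
          rw [Finset.sum_comm]
          exact Finset.sum_congr rfl fun r _ => Finset.sum_comm
      _ = ∑ r, ∑ r', if D r = D r' then (P : ℝ) else 0 :=
          Finset.sum_congr rfl fun r _ => Finset.sum_congr rfl fun r' _ => pair r r'
      _ = (P : ℝ) * ∑ x, (cnt x : ℝ) ^ 2 := by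
          rw [hsq, Finset.mul_sum]
          exact Finset.sum_congr rfl fun r _ => by
            rw [Finset.mul_sum]
            exact Finset.sum_congr rfl fun r' _ => by simp [mul_ite]
  -- mixed columns vanish
  have mixed : ∀ (j : ∀ i, Option (Fin (s i - 1))) (u v : Fin R), j u = none → j v ≠ none →
      (∑ r, g r j) = 0 := by
    intro j u v hu hv
    have huv : u ≠ v := fun h => hv (h ▸ hu)
    obtain ⟨jv, hjv⟩ : ∃ jv, j v = some jv := Option.ne_none_iff_exists'.mp hv
    set l₀ : Fin (s u) := ⟨0, by have := hs u; omega⟩ with hl₀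
    set E : Fin N → ∀ i, Fin (s i) := fun r => Function.update (D r) u l₀ with hE
    set h : (∀ i, Fin (s i)) → ℝ := fun z => ∏ i, Ct (C i) (z i) (j i) with hh
    have hgE : ∀ r, g r j = h (E r) := by
      intro r
      rw [hg, hh]
      refine Finset.prod_congr rfl fun i _ => ?_
      by_cases hiu : i = u
      · subst hiu; rw [hu]; rfl
      · rw [hE]; simp [Function.update_of_ne hiu]
    set c : ℕ := N / ∏ i ∈ Finset.univ.erase u, s i with hc'
    have hfib : ∀ z : ∀ i, Fin (s i),
        ((Finset.univ.filter fun r => E r = z).card : ℝ) = if z u = l₀ then (c : ℝ) else 0 := by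
      intro z
      by_cases hz : z u = l₀
      · rw [if_pos hz]
        have heq : (Finset.univ.filter fun r => E r = z)
            = (Finset.univ.filter fun r => ∀ i ∈ Finset.univ.erase u, D r i = z i) := by
          ext r
          simp only [Finset.mem_filter, Finset.mem_univ, true_and, Finset.mem_erase, and_imp]
          constructor
          · intro hEz i hi _
            rw [← congrFun hEz i, hE]
            simp [Function.update_of_ne hi]
          · intro hall
            funext i
            by_cases hiu : i = u
            · subst hiu; rw [hE]; simpa [Function.update_self] using hz.symm
            · rw [hE]; simp [Function.update_of_ne hiu]; exact hall i hiu trivial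
        rw [heq, hD _ ?_ z]
        rw [Finset.card_erase_of_mem (Finset.mem_univ u), Finset.card_univ, Fintype.card_fin]
      · rw [if_neg hz]
        have heq : (Finset.univ.filter fun r => E r = z) = ∅ := by
          ext r
          simp only [Finset.mem_filter, Finset.mem_univ, true_and, Finset.notMem_empty,
            iff_false]
          intro hEz
          exact hz (by rw [← congrFun hEz u, hE]; simp [Function.update_self])
        simp [heq]
    have hsumE : ∑ r, h (E r)
        = ∑ z : ∀ i, Fin (s i), ((Finset.univ.filter fun r => E r = z).card : ℝ) * h z := by
      calc ∑ r, h (E r) = ∑ r, ∑ z, if E r = z then h z else 0 := by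
            refine Finset.sum_congr rfl fun r _ => ?_
            rw [Finset.sum_ite_eq]
            simp
        _ = ∑ z, ∑ r, if E r = z then h z else 0 := Finset.sum_comm
        _ = ∑ z, ((Finset.univ.filter fun r => E r = z).card : ℝ) * h z := by
            refine Finset.sum_congr rfl fun z _ => ?_
            rw [Finset.card_filter]
            push_cast
            rw [Finset.sum_mul]
            exact Finset.sum_congr rfl fun r _ => by simp [ite_mul]
    set G : ∀ i, Fin (s i) → ℝ :=
      Function.update (fun i => fun w => Ct (C i) w (j i)) u
        (fun w => if w = l₀ then Ct (C u) w (j u) else 0) with hG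
    have hGu : G u = fun w => if w = l₀ then Ct (C u) w (j u) else 0 := by
      rw [hG]; exact Function.update_self _ _ _
    have hGi : ∀ i, i ≠ u → G i = fun w => Ct (C i) w (j i) := by
      intro i hiu; rw [hG]; exact Function.update_of_ne hiu _ _
    have hprodG : ∀ z : ∀ i, Fin (s i),
        ∏ i, G i (z i) = (if z u = l₀ then (1:ℝ) else 0) * h z := by
      intro z
      by_cases hz : z u = l₀
      · rw [if_pos hz, one_mul, hh]
        refine Finset.prod_congr rfl fun i _ => ?_
        by_cases hiu : i = u
        · subst hiu; rw [hGu]; simp only; rw [if_pos hz]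
        · rw [hGi i hiu]
      · rw [if_neg hz, zero_mul]
        refine Finset.prod_eq_zero (Finset.mem_univ u) ?_
        rw [hGu]; exact if_neg hz
    have hzero : ∑ w, G v w = 0 := by
      rw [hGi v (Ne.symm huv)]
      have : ∀ w, Ct (C v) w (j v) = C v w jv := fun w => by rw [hjv]; rfl
      rw [Finset.sum_congr rfl fun w _ => this w]
      exact (hC v).1 jv
    calc ∑ r, g r j = ∑ r, h (E r) := Finset.sum_congr rfl fun r _ => hgE r
      _ = ∑ z, ((Finset.univ.filter fun r => E r = z).card : ℝ) * h z := hsumE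
      _ = (c : ℝ) * ∑ z : ∀ i, Fin (s i), ∏ i, G i (z i) := by
          rw [Finset.mul_sum]
          refine Finset.sum_congr rfl fun z _ => ?_
          rw [hfib z, hprodG z]
          by_cases hz : z u = l₀ <;> simp [hz]
      _ = 0 := by
          rw [sum_pi_prod G, Finset.prod_eq_zero (Finset.mem_univ v) hzero, mul_zero]
  -- split Q
  set φ : (∀ i, Fin (s i - 1)) → (∀ i, Option (Fin (s i - 1))) := fun j i => some (j i) with hφ
  have hφinj : Function.Injective φ := by
    intro a b hab
    funext i
    have := congrFun hab i
    simpa [hφ] using this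
  set A : Finset (∀ i, Option (Fin (s i - 1))) := Finset.univ.image φ with hA
  have hmemA : ∀ j : ∀ i, Option (Fin (s i - 1)), j ∈ A ↔ ∀ i, j i ≠ none := by
    intro j
    constructor
    · intro hj i
      rw [hA] at hj
      obtain ⟨a, -, rfl⟩ := Finset.mem_image.mp hj
      simp [hφ]
    · intro hj
      refine Finset.mem_image.mpr
        ⟨fun i => (j i).get (Option.ne_none_iff_isSome.mp (hj i)), Finset.mem_univ _, ?_⟩
      funext i
      simp [hφ]
  have claim2 : Q = (N : ℝ) ^ 2 + ∑ j : ∀ i, Fin (s i - 1), (∑ r, ∏ i, C i (D r i) (j i)) ^ 2 := by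
    rw [hQ, ← Finset.sum_add_sum_compl A]
    have hpart1 : ∑ j ∈ A, (∑ r, g r j) ^ 2
        = ∑ j : ∀ i, Fin (s i - 1), (∑ r, ∏ i, C i (D r i) (j i)) ^ 2 := by
      rw [hA, Finset.sum_image (fun a _ b _ h => hφinj h)]
      exact Finset.sum_congr rfl fun a _ => rfl
    have hpart2 : ∑ j ∈ Aᶜ, (∑ r, g r j) ^ 2 = (N : ℝ) ^ 2 := by
      have hnone : (fun _ => none : ∀ i, Option (Fin (s i - 1))) ∈ Aᶜ := by
        rw [Finset.mem_compl]
        intro hmem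
        exact (hmemA _).mp hmem ⟨0, by omega⟩ rfl
      have hFc : ∀ jt ∈ Aᶜ, (∑ r, g r jt) ^ 2
          = if jt = (fun _ => none : ∀ i, Option (Fin (s i - 1))) then (N : ℝ) ^ 2 else 0 := by
        intro jt hjt
        by_cases hj : jt = fun _ => none
        · rw [if_pos hj, hj]
          have : ∀ r, g r (fun _ => none) = 1 := by
            intro r
            rw [hg]
            exact Finset.prod_eq_one fun i _ => rfl
          rw [Finset.sum_congr rfl fun r _ => this r]
          simp
        · rw [if_neg hj]
          obtain ⟨u, hu⟩ : ∃ u, jt u = none := by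
            by_contra hcon
            push_neg at hcon
            exact (Finset.mem_compl.mp hjt) ((hmemA jt).mpr hcon)
          obtain ⟨v, hv⟩ : ∃ v, jt v ≠ none := by
            by_contra hcon
            push_neg at hcon
            exact hj (funext hcon)
          rw [mixed jt u v hu hv]
          simp
      rw [Finset.sum_congr rfl hFc, Finset.sum_ite_eq' Aᶜ]
      rw [if_pos hnone]
    rw [hpart1, hpart2, add_comm]
  -- reindexing for projFreq
  set ψ : (∀ i : Fin R, Fin (s i - 1)) → (∀ i : (Finset.univ : Finset (Fin R)), Fin (s i.1 - 1)) :=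
    fun j i => j i.1 with hψ
  have hψbij : Function.Bijective ψ := by
    constructor
    · intro a b hab
      funext i
      exact congrFun hab ⟨i, Finset.mem_univ i⟩
    · intro j'
      exact ⟨fun i => j' ⟨i, Finset.mem_univ i⟩, by funext i; rfl⟩
  have claim3 : projFreq C D Finset.univ
      = (∑ j : ∀ i, Fin (s i - 1), (∑ r, ∏ i, C i (D r i) (j i)) ^ 2) / (N : ℝ) ^ 2 := by
    rw [projFreq]
    congr 1
    refine (Fintype.sum_bijective ψ hψbij _ _ fun j => ?_).symm
    congr 1
    refine Finset.sum_congr rfl fun r _ => ?_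
    rw [intCol]
    exact (Finset.prod_coe_sort Finset.univ fun i => C i (D r i) (j i)).symm
  -- arithmetic
  set gx : (∀ i, Fin (s i)) → ℝ := fun x => ((cnt x : ℝ) - q) * ((cnt x : ℝ) - (q + 1)) with hgx
  have hgx_nonneg : ∀ x, 0 ≤ gx x := by
    intro x
    simp only [hgx]
    rcases le_or_gt (cnt x) q with h | h
    · have h1 : (cnt x : ℝ) ≤ q := Nat.cast_le.mpr h
      nlinarith
    · have h1 : (q : ℝ) + 1 ≤ cnt x := by exact_mod_cast h
      nlinarith
  have hsum_cntR : ∑ x, (cnt x : ℝ) = (N : ℝ) := by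
    rw [← Nat.cast_sum, hsum_cnt]
  have hgx_sum : ∑ x, gx x
      = (∑ x, (cnt x : ℝ) ^ 2) - (2 * (q : ℝ) + 1) * N + (P : ℝ) * ((q : ℝ) * ((q : ℝ) + 1)) := by
    have h1 : ∀ x, gx x = (cnt x : ℝ) ^ 2 - (2 * (q : ℝ) + 1) * (cnt x : ℝ)
        + (q : ℝ) * ((q : ℝ) + 1) := fun x => by rw [hgx]; ring
    rw [Finset.sum_congr rfl fun x _ => h1 x, Finset.sum_add_distrib, Finset.sum_sub_distrib,
      Finset.sum_const, ← Finset.mul_sum, hsum_cntR, Finset.card_univ, hcard, nsmul_eq_mul]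
  have hNR : (N : ℝ) = (P : ℝ) * (q : ℝ) + (rr : ℝ) := by
    exact_mod_cast (Nat.div_add_mod N P).symm
  have key : (P : ℝ) * (∑ x, (cnt x : ℝ) ^ 2) - (N : ℝ) ^ 2
      = (P : ℝ) * (∑ x, gx x) + (rr : ℝ) * ((P : ℝ) - (rr : ℝ)) := by
    rw [hgx_sum, hNR]
    ring
  have hSj : ∑ j : ∀ i, Fin (s i - 1), (∑ r, ∏ i, C i (D r i) (j i)) ^ 2
      = (P : ℝ) * (∑ x, gx x) + (rr : ℝ) * ((P : ℝ) - (rr : ℝ)) := by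
    have h1 := claim1
    rw [claim2] at h1
    linarith [key]
  have hproj : projFreq C D Finset.univ
      = ((P : ℝ) * (∑ x, gx x) + (rr : ℝ) * ((P : ℝ) - (rr : ℝ))) / (N : ℝ) ^ 2 := by
    rw [claim3, hSj]
  have hN2 : (0 : ℝ) < (N : ℝ) ^ 2 := by positivity
  have hPSg : 0 ≤ (P : ℝ) * ∑ x, gx x :=
    mul_nonneg (by positivity) (Finset.sum_nonneg fun x _ => hgx_nonneg x)
  constructor
  · rw [hproj]
    exact (div_le_div_iff_of_pos_right hN2).mpr (by linarith)
  · rw [hproj]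
    have hiff1 : ((P : ℝ) * (∑ x, gx x) + (rr : ℝ) * ((P : ℝ) - (rr : ℝ))) / (N : ℝ) ^ 2
        = (rr : ℝ) * ((P : ℝ) - (rr : ℝ)) / (N : ℝ) ^ 2 ↔ (P : ℝ) * ∑ x, gx x = 0 := by
      rw [div_eq_div_iff hN2.ne' hN2.ne']
      constructor
      · intro h
        have h2 : ((P : ℝ) * ∑ x, gx x) * (N : ℝ) ^ 2 = 0 := by linear_combination h
        exact (mul_eq_zero.mp h2).resolve_right hN2.ne'
      · intro h
        rw [h]
        ring
    rw [hiff1]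
    have hP0 : (P : ℝ) ≠ 0 := by positivity
    constructor
    · intro h
      have hsum0 : ∑ x, gx x = 0 := (mul_eq_zero.mp h).resolve_left hP0
      have hall := (Finset.sum_eq_zero_iff_of_nonneg fun x _ => hgx_nonneg x).mp hsum0
      intro x
      have hx0 := hall x (Finset.mem_univ x)
      simp only [hgx] at hx0
      rcases mul_eq_zero.mp hx0 with h' | h'
      · left
        have hcq : (cnt x : ℝ) = q := by linarith
        show cnt x = q
        exact_mod_cast hcq
      · right
        have hcq : (cnt x : ℝ) = (q : ℝ) + 1 := by linarith
        show cnt x = q + 1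
        exact_mod_cast hcq
    · intro h
      have hz : ∀ x ∈ Finset.univ, gx x = 0 := by
        intro x _
        simp only [hgx]
        rcases h x with h' | h'
        · have h'' : cnt x = q := h'
          rw [h'']
          push_cast
          ring
        · have h'' : cnt x = q + 1 := h'
          rw [h'']
          push_cast
          ring
      rw [Finset.sum_eq_zero hz, mul_zero]
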